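/- For m,n ≥ 3, the number of distinct quartics occurring in the Fibonacci array f_{m,n} equals D(m)·D(n), where the count of distinct quartics is the sum over all sizes (2r,2l) with r,l ≥ 1 of the number of distinct 2r × 2l arrays X such that X occurs as a subarray of f_{m,n} and the four r × l quadrant blocks of X are all equal, and D(k) is the number of distinct squares that are factors of the 1D Fibonacci word f_k. Consequently the numbers of distinct Type II(a) tandems and of distinct Type II(b) tandems in f_{m,n} also equal D(m)·D(n). -/

import Mathlib

/-- Fibonacci numbers: F(0)=1, F(1)=1, F(n+2)=F(n+1)+F(n). -/
def F : ℕ → ℕ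
  | 0 => 1
  | 1 => 1
  | n + 2 => F (n + 1) + F n

/-- Finite Fibonacci words over {a,b} coded as Fin 2 (a=0, b=1). -/
def fibWord : ℕ → List (Fin 2)
  | 0 => [0]
  | 1 => [1]
  | n + 2 => fibWord (n + 1) ++ fibWord n

/-- The Fibonacci arrays f_{m,n} over {a,b,c,d} coded as Fin 2 × Fin 2,
with a=(0,0), b=(0,1), c=(1,0), d=(1,1); `fibArr m n i j` is the (i,j) entry
(0-indexed, only indices i < F m, j < F n are meaningful). -/
def fibArr : ℕ → ℕ → ℕ → ℕ → Fin 2 × Fin 2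
  | 0, 0, _, _ => (0, 0)
  | 0, 1, _, _ => (0, 1)
  | 1, 0, _, _ => (1, 0)
  | 1, 1, _, _ => (1, 1)
  | 0, n + 2, i, j =>
      if j < F (n + 1) then fibArr 0 (n + 1) i j else fibArr 0 n i (j - F (n + 1))
  | 1, n + 2, i, j =>
      if j < F (n + 1) then fibArr 1 (n + 1) i j else fibArr 1 n i (j - F (n + 1))
  | m + 2, k, i, j =>
      if i < F (m + 1) then fibArr (m + 1) k i j else fibArr m k (i - F (m + 1)) j
  termination_by m n => (m, n)

/-- The r × l subarray of u with top-left entry at (i,j). -/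
def subarr (u : ℕ → ℕ → Fin 2 × Fin 2) (i j r l : ℕ) : Fin r × Fin l → Fin 2 × Fin 2 :=
  fun p => u (i + p.1.val) (j + p.2.val)

/-- Number of square occurrences in a finite word. -/
noncomputable def sqOcc (w : List (Fin 2)) : ℕ :=
  {p : ℕ × ℕ | 1 ≤ p.2 ∧ p.1 + 2 * p.2 ≤ w.length ∧
    ∀ t < p.2, w.getD (p.1 + t) 0 = w.getD (p.1 + p.2 + t) 0}.ncard

/-- R(n): number of square occurrences in f_n. -/
noncomputable def R (n : ℕ) : ℕ := sqOcc (fibWord n)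

/-- Number of distinct nonempty factors of a word. -/
noncomputable def pFact (w : List (Fin 2)) : ℕ :=
  {v : List (Fin 2) | v ≠ [] ∧ v <:+: w}.ncard

/-- D(n): number of distinct (nonempty) squares xx occurring as factors of f_n. -/
noncomputable def D (n : ℕ) : ℕ :=
  {x : List (Fin 2) | x ≠ [] ∧ x ++ x <:+: fibWord n}.ncard

/-- The r × c array X occurs as a subarray of the Fibonacci array f_{m,n}. -/
def occursIn (m n r c : ℕ) (X : Fin r × Fin c → Fin 2 × Fin 2) : Prop :=
  ∃ i j, i + r ≤ F m ∧ j + c ≤ F n ∧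
    ∀ p : Fin r × Fin c, X p = fibArr m n (i + p.1.val) (j + p.2.val)

section FibAux

lemma fibWord_length : ∀ n, (fibWord n).length = F n
  | 0 => rfl
  | 1 => rfl
  | n + 2 => by
      simp [fibWord, F, fibWord_length (n+1), fibWord_length n]

lemma fibWord01 (k : ℕ) (hk : k < 2) (i : ℕ) (hi : i < F k) :
    (fibWord k).getD i 0 = ⟨k, hk⟩ := by
  interval_cases k <;> simp [F] at hi <;> simp [fibWord, hi]

lemma fibArr_eq : ∀ m n i j, i < F m → j < F n →
    fibArr m n i j = ((fibWord m).getD i 0, (fibWord n).getD j 0)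
  | 0, 0, i, j, hi, hj => by
      rw [fibArr, fibWord01 0 (by norm_num) i hi, fibWord01 0 (by norm_num) j hj]; rfl
  | 0, 1, i, j, hi, hj => by
      rw [fibArr, fibWord01 0 (by norm_num) i hi, fibWord01 1 (by norm_num) j hj]; rfl
  | 1, 0, i, j, hi, hj => by
      rw [fibArr, fibWord01 1 (by norm_num) i hi, fibWord01 0 (by norm_num) j hj]; rfl
  | 1, 1, i, j, hi, hj => by
      rw [fibArr, fibWord01 1 (by norm_num) i hi, fibWord01 1 (by norm_num) j hj]; rfl
  | 0, n + 2, i, j, hi, hj => by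
      rw [fibArr]
      by_cases h : j < F (n + 1)
      · rw [if_pos h, fibArr_eq 0 (n+1) i j hi h,
          show fibWord (n+2) = fibWord (n+1) ++ fibWord n from rfl,
          List.getD_append _ _ _ _ (by rw [fibWord_length]; exact h)]
      · rw [if_neg h, fibArr_eq 0 n i (j - F (n+1)) hi (by simp [F] at hj; omega),
          show fibWord (n+2) = fibWord (n+1) ++ fibWord n from rfl,
          List.getD_append_right _ _ _ _ (by rw [fibWord_length]; omega), fibWord_length]
  | 1, n + 2, i, j, hi, hj => by
      rw [fibArr]
      by_cases h : j < F (n + 1)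
      · rw [if_pos h, fibArr_eq 1 (n+1) i j hi h,
          show fibWord (n+2) = fibWord (n+1) ++ fibWord n from rfl,
          List.getD_append _ _ _ _ (by rw [fibWord_length]; exact h)]
      · rw [if_neg h, fibArr_eq 1 n i (j - F (n+1)) hi (by simp [F] at hj; omega),
          show fibWord (n+2) = fibWord (n+1) ++ fibWord n from rfl,
          List.getD_append_right _ _ _ _ (by rw [fibWord_length]; omega), fibWord_length]
  | m + 2, k, i, j, hi, hj => by
      rw [fibArr]
      by_cases h : i < F (m + 1)
      · rw [if_pos h, fibArr_eq (m+1) k i j h hj,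
          show fibWord (m+2) = fibWord (m+1) ++ fibWord m from rfl,
          List.getD_append _ _ _ _ (by rw [fibWord_length]; exact h)]
      · rw [if_neg h, fibArr_eq m k (i - F (m+1)) j (by simp [F] at hi; omega) hj,
          show fibWord (m+2) = fibWord (m+1) ++ fibWord m from rfl,
          List.getD_append_right _ _ _ _ (by rw [fibWord_length]; omega), fibWord_length]
  termination_by m n => (m, n)

lemma infix_char (v w : List (Fin 2)) :
    v <:+: w ↔ ∃ i, i + v.length ≤ w.length ∧ ∀ t < v.length, v.getD t 0 = w.getD (i + t) 0 := by
  constructor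
  · rintro ⟨s, t, rfl⟩
    refine ⟨s.length, by simp, fun u hu => ?_⟩
    rw [show s ++ v ++ t = s ++ (v ++ t) by simp,
      List.getD_append_right _ _ _ _ (by omega), Nat.add_sub_cancel_left,
      List.getD_append _ _ _ _ hu]
  · rintro ⟨i, hle, h⟩
    have hv : v = (w.drop i).take v.length := by
      apply List.ext_getElem
      · simp; omega
      · intro t h1 h2
        have := h t h1
        rw [List.getD_eq_getElem _ _ h1, List.getD_eq_getElem _ _ (by omega)] at this
        simpa using this
    rw [hv]
    exact ((w.drop i).take_prefix v.length).isInfix.trans (w.drop_suffix i).isInfix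

lemma sq_exists {x w : List (Fin 2)} (hx : x ++ x <:+: w) :
    ∃ i, i + 2 * x.length ≤ w.length ∧ ∀ t < x.length,
      x.getD t 0 = w.getD (i + t) 0 ∧ x.getD t 0 = w.getD (i + x.length + t) 0 := by
  rw [infix_char] at hx
  obtain ⟨i, hle, h⟩ := hx
  simp only [List.length_append] at hle h
  refine ⟨i, by omega, fun t ht => ⟨?_, ?_⟩⟩
  · rw [← h t (by omega), List.getD_append _ _ _ _ ht]
  · rw [show i + x.length + t = i + (x.length + t) by omega, ← h (x.length + t) (by omega),
      List.getD_append_right _ _ _ _ (by omega), Nat.add_sub_cancel_left]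

lemma dbl_getD {w x : List (Fin 2)} {i r : ℕ} (hlen : x.length = r)
    (hx : ∀ t < r, x.getD t 0 = w.getD (i + t) 0)
    (hrow : ∀ p < r, w.getD (i + p) 0 = w.getD (i + r + p) 0) :
    ∀ t < 2 * r, (x ++ x).getD t 0 = w.getD (i + t) 0 := by
  intro t ht
  by_cases h : t < r
  · rw [List.getD_append _ _ _ _ (by omega)]; exact hx t h
  · rw [List.getD_append_right _ _ _ _ (by omega), hlen, hx (t - r) (by omega),
      hrow (t - r) (by omega)]
    congr 1; omega

lemma sq_build {w : List (Fin 2)} {i r : ℕ} (hr : 1 ≤ r) (hle : i + 2 * r ≤ w.length)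
    (hrow : ∀ p < r, w.getD (i + p) 0 = w.getD (i + r + p) 0) :
    ∃ x : List (Fin 2), x.length = r ∧ x ≠ [] ∧ x ++ x <:+: w ∧
      ∀ t < r, x.getD t 0 = w.getD (i + t) 0 := by
  set x := (w.drop i).take r with hxdef
  have hxlen : x.length = r := by simp [hxdef]; omega
  have hget : ∀ t < r, x.getD t 0 = w.getD (i + t) 0 := by
    intro t ht
    rw [List.getD_eq_getElem _ _ (show t < x.length by omega),
      List.getD_eq_getElem _ _ (show i + t < w.length by omega)]
    simp [hxdef]
  refine ⟨x, hxlen, (by intro h; rw [h] at hxlen; simp at hxlen; omega), ?_, hget⟩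
  rw [infix_char]
  refine ⟨i, by simp [hxlen]; omega, fun t ht => ?_⟩
  rw [List.length_append, hxlen] at ht
  exact dbl_getD hxlen hget hrow t (by omega)

lemma append_self_getD (x : List (Fin 2)) (t : ℕ) (ht : t < x.length) :
    (x ++ x).getD (t + x.length) 0 = (x ++ x).getD t 0 := by
  rw [List.getD_append _ _ _ _ ht, List.getD_append_right _ _ _ _ (by omega)]
  congr 1; omega

def Q1 (x y : List (Fin 2)) : (r:ℕ) × (l:ℕ) × (Fin (2*r) × Fin (2*l) → Fin 2 × Fin 2) :=
  ⟨x.length, y.length, fun p => ((x ++ x).getD p.1.val 0, (y ++ y).getD p.2.val 0)⟩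

def Q2 (x y : List (Fin 2)) : (r:ℕ) × (l:ℕ) × (Fin r × Fin l → Fin 2 × Fin 2) :=
  ⟨x.length, y.length, fun p => (x.getD p.1.val 0, y.getD p.2.val 0)⟩

def row1 (s : (r:ℕ) × (l:ℕ) × (Fin (2*r) × Fin (2*l) → Fin 2 × Fin 2)) : List (Fin 2) :=
  List.ofFn (fun t : Fin s.1 =>
    if h : 0 < s.2.1 then (s.2.2 (⟨t.val, by omega⟩, ⟨0, by omega⟩)).1 else 0)

def col1 (s : (r:ℕ) × (l:ℕ) × (Fin (2*r) × Fin (2*l) → Fin 2 × Fin 2)) : List (Fin 2) :=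
  List.ofFn (fun t : Fin s.2.1 =>
    if h : 0 < s.1 then (s.2.2 (⟨0, by omega⟩, ⟨t.val, by omega⟩)).2 else 0)

def row2 (s : (r:ℕ) × (l:ℕ) × (Fin r × Fin l → Fin 2 × Fin 2)) : List (Fin 2) :=
  List.ofFn (fun t : Fin s.1 => if h : 0 < s.2.1 then (s.2.2 (t, ⟨0, h⟩)).1 else 0)

def col2 (s : (r:ℕ) × (l:ℕ) × (Fin r × Fin l → Fin 2 × Fin 2)) : List (Fin 2) :=
  List.ofFn (fun t : Fin s.2.1 => if h : 0 < s.1 then (s.2.2 (⟨0, h⟩, t)).2 else 0)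

lemma ofFn_getD (x : List (Fin 2)) :
    List.ofFn (fun t : Fin x.length => x.getD t.val 0) = x := by
  conv_rhs => rw [← List.ofFn_getElem (xs := x)]
  congr 1
  ext t
  rw [List.getD_eq_getElem _ _ t.isLt]

lemma row1_Q1 (x y : List (Fin 2)) (hy : y ≠ []) : row1 (Q1 x y) = x := by
  conv_rhs => rw [← ofFn_getD x]
  unfold row1 Q1
  congr 1
  ext t
  rw [dif_pos (List.length_pos_iff.2 hy)]
  exact congrArg Fin.val (List.getD_append _ _ _ _ t.isLt)

lemma col1_Q1 (x y : List (Fin 2)) (hx : x ≠ []) : col1 (Q1 x y) = y := by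
  conv_rhs => rw [← ofFn_getD y]
  unfold col1 Q1
  congr 1
  ext t
  rw [dif_pos (List.length_pos_iff.2 hx)]
  exact congrArg Fin.val (List.getD_append _ _ _ _ t.isLt)

lemma row2_Q2 (x y : List (Fin 2)) (hy : y ≠ []) : row2 (Q2 x y) = x := by
  conv_rhs => rw [← ofFn_getD x]
  unfold row2 Q2
  congr 1
  ext t
  rw [dif_pos (List.length_pos_iff.2 hy)]

lemma col2_Q2 (x y : List (Fin 2)) (hx : x ≠ []) : col2 (Q2 x y) = y := by
  conv_rhs => rw [← ofFn_getD y]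
  unfold col2 Q2
  congr 1
  ext t
  rw [dif_pos (List.length_pos_iff.2 hx)]

lemma ncard_prod' (A B : Set (List (Fin 2))) : (A ×ˢ B).ncard = A.ncard * B.ncard := by
  simp only [← Nat.card_coe_set_eq]
  rw [Nat.card_congr (Equiv.Set.prod A B), Nat.card_prod]

end FibAux

/-- For m,n ≥ 3, the number of distinct quartics occurring in f_{m,n}
(over all sizes (2r,2l), r,l ≥ 1: distinct 2r × 2l arrays X occurring in f_{m,n} whose four
r × l quadrant blocks are all equal) is D(m)·D(n); consequently the numbers of distinct
Type II(a) tandems and of distinct Type II(b) tandems in f_{m,n} also equal D(m)·D(n). -/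
theorem stmt10 (m n : ℕ) (hm : 3 ≤ m) (hn : 3 ≤ n) :
    ({x : (r : ℕ) × (l : ℕ) × (Fin (2 * r) × Fin (2 * l) → Fin 2 × Fin 2) |
      1 ≤ x.1 ∧ 1 ≤ x.2.1 ∧ occursIn m n (2 * x.1) (2 * x.2.1) x.2.2 ∧
      ∀ (p : Fin x.1) (q : Fin x.2.1),
        x.2.2 (⟨p.val, by have := p.isLt; omega⟩, ⟨q.val, by have := q.isLt; omega⟩)
          = x.2.2 (⟨p.val, by have := p.isLt; omega⟩,
              ⟨q.val + x.2.1, by have := q.isLt; omega⟩) ∧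
        x.2.2 (⟨p.val, by have := p.isLt; omega⟩, ⟨q.val, by have := q.isLt; omega⟩)
          = x.2.2 (⟨p.val + x.1, by have := p.isLt; omega⟩,
              ⟨q.val, by have := q.isLt; omega⟩) ∧
        x.2.2 (⟨p.val, by have := p.isLt; omega⟩, ⟨q.val, by have := q.isLt; omega⟩)
          = x.2.2 (⟨p.val + x.1, by have := p.isLt; omega⟩,
              ⟨q.val + x.2.1, by have := q.isLt; omega⟩)}.ncard
      = D m * D n) ∧
    ({w : (r : ℕ) × (l : ℕ) × (Fin r × Fin l → Fin 2 × Fin 2) |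
      1 ≤ w.1 ∧ 1 ≤ w.2.1 ∧
      ∃ i j, i + 2 * w.1 ≤ F m ∧ j + 2 * w.2.1 ≤ F n ∧
        w.2.2 = subarr (fibArr m n) i j w.1 w.2.1 ∧
        w.2.2 = subarr (fibArr m n) (i + w.1) (j + w.2.1) w.1 w.2.1}.ncard
      = D m * D n) ∧
    ({w : (r : ℕ) × (l : ℕ) × (Fin r × Fin l → Fin 2 × Fin 2) |
      1 ≤ w.1 ∧ 1 ≤ w.2.1 ∧
      ∃ i j, i + 2 * w.1 ≤ F m ∧ j + 2 * w.2.1 ≤ F n ∧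
        w.2.2 = subarr (fibArr m n) i (j + w.2.1) w.1 w.2.1 ∧
        w.2.2 = subarr (fibArr m n) (i + w.1) j w.1 w.2.1}.ncard
      = D m * D n) := by
  have hWm := fibWord_length m
  have hWn := fibWord_length n
  set A : Set (List (Fin 2)) := {x | x ≠ [] ∧ x ++ x <:+: fibWord m} with hA
  set B : Set (List (Fin 2)) := {x | x ≠ [] ∧ x ++ x <:+: fibWord n} with hB
  have hDD : A.ncard * B.ncard = D m * D n := rfl
  have hinj1 : Set.InjOn (fun p : List (Fin 2) × List (Fin 2) => Q1 p.1 p.2) (A ×ˢ B) := by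
    rintro ⟨x, y⟩ ⟨⟨hx, -⟩, hy, -⟩ ⟨x', y'⟩ ⟨⟨hx', -⟩, hy', -⟩ h
    dsimp only at h
    have h1 : x = x' := by rw [← row1_Q1 x y hy, h, row1_Q1 x' y' hy']
    have h2 : y = y' := by rw [← col1_Q1 x y hx, h, col1_Q1 x' y' hx']
    rw [Prod.mk.injEq]
    exact ⟨h1, h2⟩
  have hinj2 : Set.InjOn (fun p : List (Fin 2) × List (Fin 2) => Q2 p.1 p.2) (A ×ˢ B) := by
    rintro ⟨x, y⟩ ⟨⟨hx, -⟩, hy, -⟩ ⟨x', y'⟩ ⟨⟨hx', -⟩, hy', -⟩ h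
    dsimp only at h
    have h1 : x = x' := by rw [← row2_Q2 x y hy, h, row2_Q2 x' y' hy']
    have h2 : y = y' := by rw [← col2_Q2 x y hx, h, col2_Q2 x' y' hx']
    rw [Prod.mk.injEq]
    exact ⟨h1, h2⟩
  refine ⟨?_, ?_, ?_⟩
  · -- Part 1: quartics
    have himg : {x : (r : ℕ) × (l : ℕ) × (Fin (2 * r) × Fin (2 * l) → Fin 2 × Fin 2) |
      1 ≤ x.1 ∧ 1 ≤ x.2.1 ∧ occursIn m n (2 * x.1) (2 * x.2.1) x.2.2 ∧
      ∀ (p : Fin x.1) (q : Fin x.2.1),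
        x.2.2 (⟨p.val, by have := p.isLt; omega⟩, ⟨q.val, by have := q.isLt; omega⟩)
          = x.2.2 (⟨p.val, by have := p.isLt; omega⟩,
              ⟨q.val + x.2.1, by have := q.isLt; omega⟩) ∧
        x.2.2 (⟨p.val, by have := p.isLt; omega⟩, ⟨q.val, by have := q.isLt; omega⟩)
          = x.2.2 (⟨p.val + x.1, by have := p.isLt; omega⟩,
              ⟨q.val, by have := q.isLt; omega⟩) ∧
        x.2.2 (⟨p.val, by have := p.isLt; omega⟩, ⟨q.val, by have := q.isLt; omega⟩)
          = x.2.2 (⟨p.val + x.1, by have := p.isLt; omega⟩,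
              ⟨q.val + x.2.1, by have := q.isLt; omega⟩)}
        = (fun p : List (Fin 2) × List (Fin 2) => Q1 p.1 p.2) '' (A ×ˢ B) := by
      ext s
      constructor
      · rintro ⟨hr, hl, ⟨i, j, him, hjn, hocc⟩, hquad⟩
        obtain ⟨r, l, X⟩ := s
        dsimp only at hr hl him hjn hocc hquad
        have hrow : ∀ p < r, (fibWord m).getD (i + p) 0 = (fibWord m).getD (i + r + p) 0 := by
          intro p hp
          have e := (hquad ⟨p, hp⟩ ⟨0, hl⟩).2.1
          have e2 : fibArr m n (i + p) (j + 0) = fibArr m n (i + (p + r)) (j + 0) :=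
            (hocc (⟨p, by omega⟩, ⟨0, by omega⟩)).symm.trans
              (e.trans (hocc (⟨p + r, by omega⟩, ⟨0, by omega⟩)))
          rw [fibArr_eq m n _ _ (by omega) (by omega),
            fibArr_eq m n _ _ (by omega) (by omega), Prod.mk.injEq] at e2
          have h3 : i + (p + r) = i + r + p := by omega
          rw [h3] at e2
          exact e2.1
        have hcol : ∀ q < l, (fibWord n).getD (j + q) 0 = (fibWord n).getD (j + l + q) 0 := by
          intro q hq
          have e := (hquad ⟨0, hr⟩ ⟨q, hq⟩).1
          have e2 : fibArr m n (i + 0) (j + q) = fibArr m n (i + 0) (j + (q + l)) :=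
            (hocc (⟨0, by omega⟩, ⟨q, by omega⟩)).symm.trans
              (e.trans (hocc (⟨0, by omega⟩, ⟨q + l, by omega⟩)))
          rw [fibArr_eq m n _ _ (by omega) (by omega),
            fibArr_eq m n _ _ (by omega) (by omega), Prod.mk.injEq] at e2
          have h3 : j + (q + l) = j + l + q := by omega
          rw [h3] at e2
          exact e2.2
        obtain ⟨x, hxlen, hxne, hxsq, hxget⟩ := sq_build hr (by rw [fibWord_length]; exact him) hrow
        obtain ⟨y, hylen, hyne, hysq, hyget⟩ := sq_build hl (by rw [fibWord_length]; exact hjn) hcol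
        refine ⟨(x, y), ⟨⟨hxne, hxsq⟩, hyne, hysq⟩, ?_⟩
        subst hxlen; subst hylen
        show Q1 x y = ⟨x.length, y.length, X⟩
        unfold Q1
        refine congrArg (fun f => (⟨x.length, ⟨y.length, f⟩⟩ :
          (r : ℕ) × (l : ℕ) × (Fin (2 * r) × Fin (2 * l) → Fin 2 × Fin 2))) ?_
        funext p
        rw [hocc p, fibArr_eq m n _ _ (by have := p.1.isLt; omega) (by have := p.2.isLt; omega)]
        exact Prod.ext (dbl_getD rfl hxget hrow p.1.val p.1.isLt)
          (dbl_getD rfl hyget hcol p.2.val p.2.isLt)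
      · rintro ⟨⟨x, y⟩, ⟨⟨hxne, hxsq⟩, hyne, hysq⟩, rfl⟩
        simp only at hxne hxsq hyne hysq
        obtain ⟨i, hile, hx⟩ := sq_exists hxsq
        obtain ⟨j, hjle, hy⟩ := sq_exists hysq
        rw [hWm] at hile
        rw [hWn] at hjle
        have hrow : ∀ p < x.length,
            (fibWord m).getD (i + p) 0 = (fibWord m).getD (i + x.length + p) 0 :=
          fun p hp => ((hx p hp).1).symm.trans (hx p hp).2
        have hcol : ∀ q < y.length,
            (fibWord n).getD (j + q) 0 = (fibWord n).getD (j + y.length + q) 0 :=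
          fun q hq => ((hy q hq).1).symm.trans (hy q hq).2
        refine ⟨List.length_pos_iff.2 hxne, List.length_pos_iff.2 hyne, ⟨i, j, hile, hjle, fun p => ?_⟩,
          fun p q => ⟨?_, ?_, ?_⟩⟩
        · rw [fibArr_eq m n _ _
            (by have h1 : (p.1 : ℕ) < 2 * x.length := p.1.isLt; omega)
            (by have h1 : (p.2 : ℕ) < 2 * y.length := p.2.isLt; omega)]
          exact Prod.ext (dbl_getD rfl (fun t ht => (hx t ht).1) hrow p.1.val p.1.isLt)
            (dbl_getD rfl (fun t ht => (hy t ht).1) hcol p.2.val p.2.isLt)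
        · exact Prod.ext rfl (append_self_getD y q.val q.isLt).symm
        · exact Prod.ext (append_self_getD x p.val p.isLt).symm rfl
        · exact Prod.ext (append_self_getD x p.val p.isLt).symm
            (append_self_getD y q.val q.isLt).symm
    rw [himg, Set.ncard_image_of_injOn hinj1, ncard_prod']
    exact hDD
  · -- Part 2: Type II(a)
    have himg : {w : (r : ℕ) × (l : ℕ) × (Fin r × Fin l → Fin 2 × Fin 2) |
      1 ≤ w.1 ∧ 1 ≤ w.2.1 ∧
      ∃ i j, i + 2 * w.1 ≤ F m ∧ j + 2 * w.2.1 ≤ F n ∧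
        w.2.2 = subarr (fibArr m n) i j w.1 w.2.1 ∧
        w.2.2 = subarr (fibArr m n) (i + w.1) (j + w.2.1) w.1 w.2.1}
        = (fun p : List (Fin 2) × List (Fin 2) => Q2 p.1 p.2) '' (A ×ˢ B) := by
      ext s
      constructor
      · rintro ⟨hr, hl, i, j, him, hjn, hw1, hw2⟩
        obtain ⟨r, l, X⟩ := s
        dsimp only at hr hl him hjn hw1 hw2
        have hrow : ∀ p < r, (fibWord m).getD (i + p) 0 = (fibWord m).getD (i + r + p) 0 := by
          intro p hp
          have e : fibArr m n (i + p) (j + 0) = fibArr m n (i + r + p) (j + l + 0) :=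
            (congrFun hw1 (⟨p, hp⟩, ⟨0, hl⟩)).symm.trans (congrFun hw2 (⟨p, hp⟩, ⟨0, hl⟩))
          rw [fibArr_eq m n _ _ (by omega) (by omega),
            fibArr_eq m n _ _ (by omega) (by omega), Prod.mk.injEq] at e
          exact e.1
        have hcol : ∀ q < l, (fibWord n).getD (j + q) 0 = (fibWord n).getD (j + l + q) 0 := by
          intro q hq
          have e : fibArr m n (i + 0) (j + q) = fibArr m n (i + r + 0) (j + l + q) :=
            (congrFun hw1 (⟨0, hr⟩, ⟨q, hq⟩)).symm.trans (congrFun hw2 (⟨0, hr⟩, ⟨q, hq⟩))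
          rw [fibArr_eq m n _ _ (by omega) (by omega),
            fibArr_eq m n _ _ (by omega) (by omega), Prod.mk.injEq] at e
          exact e.2
        obtain ⟨x, hxlen, hxne, hxsq, hxget⟩ := sq_build hr (by rw [fibWord_length]; exact him) hrow
        obtain ⟨y, hylen, hyne, hysq, hyget⟩ := sq_build hl (by rw [fibWord_length]; exact hjn) hcol
        refine ⟨(x, y), ⟨⟨hxne, hxsq⟩, hyne, hysq⟩, ?_⟩
        subst hxlen; subst hylen
        show Q2 x y = ⟨x.length, y.length, X⟩
        unfold Q2
        refine congrArg (fun f => (⟨x.length, ⟨y.length, f⟩⟩ :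
          (r : ℕ) × (l : ℕ) × (Fin r × Fin l → Fin 2 × Fin 2))) ?_
        funext p
        rw [congrFun hw1 p]
        show _ = fibArr m n (i + p.1.val) (j + p.2.val)
        rw [fibArr_eq m n _ _ (by have := p.1.isLt; omega) (by have := p.2.isLt; omega)]
        exact Prod.ext (hxget p.1.val p.1.isLt) (hyget p.2.val p.2.isLt)
      · rintro ⟨⟨x, y⟩, ⟨⟨hxne, hxsq⟩, hyne, hysq⟩, rfl⟩
        simp only at hxne hxsq hyne hysq
        obtain ⟨i, hile, hx⟩ := sq_exists hxsq
        obtain ⟨j, hjle, hy⟩ := sq_exists hysq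
        rw [hWm] at hile
        rw [hWn] at hjle
        refine ⟨List.length_pos_iff.2 hxne, List.length_pos_iff.2 hyne, i, j, hile, hjle, ?_, ?_⟩
        · funext p
          show _ = fibArr m n (i + p.1.val) (j + p.2.val)
          rw [fibArr_eq m n _ _
            (by have h1 : (p.1 : ℕ) < x.length := p.1.isLt; omega)
            (by have h1 : (p.2 : ℕ) < y.length := p.2.isLt; omega)]
          exact Prod.ext (hx p.1.val p.1.isLt).1 (hy p.2.val p.2.isLt).1
        · funext p
          show _ = fibArr m n (i + x.length + p.1.val) (j + y.length + p.2.val)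
          rw [fibArr_eq m n _ _
            (by have h1 : (p.1 : ℕ) < x.length := p.1.isLt; omega)
            (by have h1 : (p.2 : ℕ) < y.length := p.2.isLt; omega)]
          exact Prod.ext (hx p.1.val p.1.isLt).2 (hy p.2.val p.2.isLt).2
    rw [himg, Set.ncard_image_of_injOn hinj2, ncard_prod']
    exact hDD
  · -- Part 3: Type II(b)
    have himg : {w : (r : ℕ) × (l : ℕ) × (Fin r × Fin l → Fin 2 × Fin 2) |
      1 ≤ w.1 ∧ 1 ≤ w.2.1 ∧
      ∃ i j, i + 2 * w.1 ≤ F m ∧ j + 2 * w.2.1 ≤ F n ∧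
        w.2.2 = subarr (fibArr m n) i (j + w.2.1) w.1 w.2.1 ∧
        w.2.2 = subarr (fibArr m n) (i + w.1) j w.1 w.2.1}
        = (fun p : List (Fin 2) × List (Fin 2) => Q2 p.1 p.2) '' (A ×ˢ B) := by
      ext s
      constructor
      · rintro ⟨hr, hl, i, j, him, hjn, hw1, hw2⟩
        obtain ⟨r, l, X⟩ := s
        dsimp only at hr hl him hjn hw1 hw2
        have hrow : ∀ p < r, (fibWord m).getD (i + p) 0 = (fibWord m).getD (i + r + p) 0 := by
          intro p hp
          have e : fibArr m n (i + p) (j + l + 0) = fibArr m n (i + r + p) (j + 0) :=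
            (congrFun hw1 (⟨p, hp⟩, ⟨0, hl⟩)).symm.trans (congrFun hw2 (⟨p, hp⟩, ⟨0, hl⟩))
          rw [fibArr_eq m n _ _ (by omega) (by omega),
            fibArr_eq m n _ _ (by omega) (by omega), Prod.mk.injEq] at e
          exact e.1
        have hcol : ∀ q < l, (fibWord n).getD (j + q) 0 = (fibWord n).getD (j + l + q) 0 := by
          intro q hq
          have e : fibArr m n (i + 0) (j + l + q) = fibArr m n (i + r + 0) (j + q) :=
            (congrFun hw1 (⟨0, hr⟩, ⟨q, hq⟩)).symm.trans (congrFun hw2 (⟨0, hr⟩, ⟨q, hq⟩))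
          rw [fibArr_eq m n _ _ (by omega) (by omega),
            fibArr_eq m n _ _ (by omega) (by omega), Prod.mk.injEq] at e
          exact e.2.symm
        obtain ⟨x, hxlen, hxne, hxsq, hxget⟩ := sq_build hr (by rw [fibWord_length]; exact him) hrow
        obtain ⟨y, hylen, hyne, hysq, hyget⟩ := sq_build hl (by rw [fibWord_length]; exact hjn) hcol
        refine ⟨(x, y), ⟨⟨hxne, hxsq⟩, hyne, hysq⟩, ?_⟩
        subst hxlen; subst hylen
        show Q2 x y = ⟨x.length, y.length, X⟩
        unfold Q2
        refine congrArg (fun f => (⟨x.length, ⟨y.length, f⟩⟩ :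
          (r : ℕ) × (l : ℕ) × (Fin r × Fin l → Fin 2 × Fin 2))) ?_
        funext p
        rw [congrFun hw2 p]
        show _ = fibArr m n (i + x.length + p.1.val) (j + p.2.val)
        rw [fibArr_eq m n _ _ (by have := p.1.isLt; omega) (by have := p.2.isLt; omega)]
        exact Prod.ext ((hxget p.1.val p.1.isLt).trans (hrow p.1.val p.1.isLt))
          (hyget p.2.val p.2.isLt)
      · rintro ⟨⟨x, y⟩, ⟨⟨hxne, hxsq⟩, hyne, hysq⟩, rfl⟩
        simp only at hxne hxsq hyne hysq
        obtain ⟨i, hile, hx⟩ := sq_exists hxsq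
        obtain ⟨j, hjle, hy⟩ := sq_exists hysq
        rw [hWm] at hile
        rw [hWn] at hjle
        refine ⟨List.length_pos_iff.2 hxne, List.length_pos_iff.2 hyne, i, j, hile, hjle, ?_, ?_⟩
        · funext p
          show _ = fibArr m n (i + p.1.val) (j + y.length + p.2.val)
          rw [fibArr_eq m n _ _
            (by have h1 : (p.1 : ℕ) < x.length := p.1.isLt; omega)
            (by have h1 : (p.2 : ℕ) < y.length := p.2.isLt; omega)]
          exact Prod.ext (hx p.1.val p.1.isLt).1 (hy p.2.val p.2.isLt).2
        · funext p
          show _ = fibArr m n (i + x.length + p.1.val) (j + p.2.val)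
          rw [fibArr_eq m n _ _
            (by have h1 : (p.1 : ℕ) < x.length := p.1.isLt; omega)
            (by have h1 : (p.2 : ℕ) < y.length := p.2.isLt; omega)]
          exact Prod.ext (hx p.1.val p.1.isLt).2 (hy p.2.val p.2.isLt).1
    rw [himg, Set.ncard_image_of_injOn hinj2, ncard_prod']
    exact hDD
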